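/- If A ∈ 𝒰 (A is open in the I-sparse set topology) and x ∈ A, then the upper I-density satisfies I-d⁻(x, A') = 1 for every measurable cover A' of A. -/
import Mathlib


open MeasureTheory Filter Set
open scoped ENNReal

noncomputable section

/-- A nontrivial admissible ideal of subsets of ℕ: closed under subsets and
finite unions, contains every finite set, and does not contain ℕ itself. -/
structure AdmissibleIdeal : Type where
  carrier : Set (Set ℕ)
  subset_mem : ∀ ⦃A B : Set ℕ⦄, A ∈ carrier → B ⊆ A → B ∈ carrier
  union_mem : ∀ ⦃A B : Set ℕ⦄, A ∈ carrier → B ∈ carrier → A ∪ B ∈ carrier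
  finite_mem : ∀ A : Set ℕ, A.Finite → A ∈ carrier
  univ_not_mem : (Set.univ : Set ℕ) ∉ carrier

/-- The filter F(I) = {M ⊆ ℕ : ℕ \ M ∈ I} associated with the ideal I. -/
def AdmissibleIdeal.filter (I : AdmissibleIdeal) : Filter ℕ :=
  Filter.comk (· ∈ I.carrier) (I.finite_mem ∅ Set.finite_empty)
    (fun _t ht _s hs => I.subset_mem ht hs)
    (fun _s hs _t ht => I.union_mem hs ht)

/-- A sequence of closed intervals admissible about the point `p`:
each `J n` is a closed interval containing `p`, and
`{n : 0 < λ(J n) < 1/n} ∈ F(I)`. -/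
def AdmissibleSeq (I : AdmissibleIdeal) (p : ℝ) (J : ℕ → Set ℝ) : Prop :=
  (∀ n, ∃ a b : ℝ, a ≤ b ∧ J n = Set.Icc a b) ∧ (∀ n, p ∈ J n) ∧
    {n : ℕ | 0 < volume (J n) ∧ volume (J n) < (n : ℝ≥0∞)⁻¹} ∈ I.filter

/-- The sequence n ↦ λ(E ∩ J n)/λ(J n) (interpreted as 0 when λ(J n) = 0). -/
def ratioSeq (E : Set ℝ) (J : ℕ → Set ℝ) : ℕ → ℝ :=
  fun n => (volume (E ∩ J n) / volume (J n)).toReal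

/-- Upper I-density of `E` at `p`: sup over admissible sequences of the
limsup along `F(I)` of the measure ratios. -/
def upperIDensity (I : AdmissibleIdeal) (p : ℝ) (E : Set ℝ) : ℝ :=
  sSup {l : ℝ | ∃ J : ℕ → Set ℝ, AdmissibleSeq I p J ∧
    l = Filter.limsup (ratioSeq E J) I.filter}

/-- Lower I-density of `E` at `p`: inf over admissible sequences of the
liminf along `F(I)` of the measure ratios. -/
def lowerIDensity (I : AdmissibleIdeal) (p : ℝ) (E : Set ℝ) : ℝ :=
  sInf {l : ℝ | ∃ J : ℕ → Set ℝ, AdmissibleSeq I p J ∧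
    l = Filter.liminf (ratioSeq E J) I.filter}

/-- `C` is a measurable cover of `A`. -/
def IsMeasurableCover (C A : Set ℝ) : Prop :=
  MeasurableSet C ∧ A ⊆ C ∧
    ∀ F : Set ℝ, MeasurableSet F → F ⊆ C \ A → volume F = 0

/-- `A` is I-sparse at `x`, i.e. `A ∈ S_I(x)`. -/
def ISparseAt (I : AdmissibleIdeal) (A : Set ℝ) (x : ℝ) : Prop :=
  ∀ B : Set ℝ, MeasurableSet B → upperIDensity I x B < 1 →
    ∀ C : Set ℝ, IsMeasurableCover C A → upperIDensity I x (C ∪ B) < 1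

/-- The I-density topology T_I. -/
def IDensityTopology (I : AdmissibleIdeal) : Set (Set ℝ) :=
  {E | MeasurableSet E ∧ ∀ x ∈ E, lowerIDensity I x E = 1}

/-- The I-sparse set topology 𝒰. -/
def sparseTop (I : AdmissibleIdeal) : Set (Set ℝ) :=
  {E | ∀ x ∈ E, ISparseAt I Eᶜ x}

-- auxiliary lemmas

lemma IFilter.neBot (I : AdmissibleIdeal) : I.filter.NeBot := by
  refine Filter.neBot_iff.mpr (fun h => I.univ_not_mem ?_)
  have : (∅ : Set ℕ) ∈ I.filter := h ▸ Filter.mem_bot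
  simpa [AdmissibleIdeal.filter, Filter.mem_comk] using this

lemma ratioSeq_le_one (E : Set ℝ) (J : ℕ → Set ℝ) (n : ℕ) : ratioSeq E J n ≤ 1 := by
  have h : volume (E ∩ J n) / volume (J n) ≤ 1 :=
    ENNReal.div_le_of_le_mul (by simpa using measure_mono (Set.inter_subset_right))
  calc (volume (E ∩ J n) / volume (J n)).toReal ≤ (1 : ℝ≥0∞).toReal :=
        ENNReal.toReal_mono (by simp) h
    _ = 1 := by simp

lemma baseSeq_admissible (I : AdmissibleIdeal) (x : ℝ) :
    AdmissibleSeq I x (fun n => Set.Icc x (x + ((n : ℝ) + 2)⁻¹)) := by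
  have hpos : ∀ n : ℕ, (0 : ℝ) < ((n : ℝ) + 2)⁻¹ := fun n => by positivity
  refine ⟨fun n => ⟨x, x + ((n : ℝ) + 2)⁻¹, by linarith [hpos n], rfl⟩,
    fun n => ⟨le_refl x, by linarith [hpos n]⟩, ?_⟩
  have : {n : ℕ | 0 < volume (Set.Icc x (x + ((n : ℝ) + 2)⁻¹)) ∧
      volume (Set.Icc x (x + ((n : ℝ) + 2)⁻¹)) < (n : ℝ≥0∞)⁻¹} = Set.univ := by
    ext n
    simp only [Set.mem_setOf_eq, Set.mem_univ, iff_true, Real.volume_Icc]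
    have hv : x + ((n : ℝ) + 2)⁻¹ - x = ((n : ℝ) + 2)⁻¹ := by ring
    rw [hv]
    constructor
    · simpa using hpos n
    · rcases Nat.eq_zero_or_pos n with h0 | hn
      · subst h0; simp [ENNReal.ofReal_lt_top]
      · have hn' : (0 : ℝ) < n := by exact_mod_cast hn
        have : ((n : ℝ≥0∞))⁻¹ = ENNReal.ofReal ((n : ℝ))⁻¹ := by
          rw [ENNReal.ofReal_inv_of_pos hn', ENNReal.ofReal_natCast]
        rw [this]
        apply ENNReal.ofReal_lt_ofReal_iff_of_nonneg (le_of_lt (hpos n)) |>.mpr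
        rw [inv_lt_inv₀ (by linarith) hn']
        linarith
  rw [this]
  simp [AdmissibleIdeal.filter, Filter.mem_comk]

lemma upperIDensity_le_one (I : AdmissibleIdeal) (x : ℝ) (E : Set ℝ) :
    upperIDensity I x E ≤ 1 := by
  have := IFilter.neBot I
  apply csSup_le
  · exact ⟨_, _, baseSeq_admissible I x, rfl⟩
  · rintro l ⟨J, _, rfl⟩
    exact Filter.limsup_le_of_le
      (Filter.isCoboundedUnder_le_of_le _ (fun n => ENNReal.toReal_nonneg))
      (Filter.Eventually.of_forall (ratioSeq_le_one E J))

lemma upperIDensity_univ (I : AdmissibleIdeal) (x : ℝ) :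
    upperIDensity I x Set.univ = 1 := by
  have := IFilter.neBot I
  refine le_antisymm (upperIDensity_le_one I x _) ?_
  have hmem : (1 : ℝ) ∈ {l : ℝ | ∃ J : ℕ → Set ℝ, AdmissibleSeq I x J ∧
      l = Filter.limsup (ratioSeq Set.univ J) I.filter} := by
    refine ⟨_, baseSeq_admissible I x, ?_⟩
    have hr : ratioSeq Set.univ (fun n => Set.Icc x (x + ((n : ℝ) + 2)⁻¹)) = fun _ => 1 := by
      funext n
      have hpos : (0 : ℝ) < ((n : ℝ) + 2)⁻¹ := by positivity
      have hv : volume (Set.Icc x (x + ((n : ℝ) + 2)⁻¹)) =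
          ENNReal.ofReal (((n : ℝ) + 2)⁻¹) := by
        rw [Real.volume_Icc]; congr 1; ring
      simp only [ratioSeq, Set.univ_inter, hv]
      rw [ENNReal.div_self (by simp only [ne_eq, ENNReal.ofReal_eq_zero, not_le]; exact hpos) (by simp)]
      simp
    rw [hr, Filter.limsup_const]
  refine le_csSup ?_ hmem
  refine ⟨1, ?_⟩
  rintro l ⟨J, _, rfl⟩
  exact Filter.limsup_le_of_le
    (Filter.isCoboundedUnder_le_of_le _ (fun n => ENNReal.toReal_nonneg))
    (Filter.Eventually.of_forall (ratioSeq_le_one _ J))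


/-- If `A` is open in the I-sparse set topology and `x ∈ A`, then every measurable
cover of `A` has upper I-density one at `x`. -/
theorem upperIDensity_cover_of_sparseTop_mem (I : AdmissibleIdeal) (A : Set ℝ)
    (hA : A ∈ sparseTop I) (x : ℝ) (hx : x ∈ A) :
    ∀ A' : Set ℝ, IsMeasurableCover A' A → upperIDensity I x A' = 1 := by
  intro A' hA'
  refine le_antisymm (upperIDensity_le_one I x A') (not_lt.mp fun hlt => ?_)
  have hsp := hA x hx
  set C := toMeasurable volume Aᶜ with hC
  have hcov : IsMeasurableCover C Aᶜ := by
    refine ⟨measurableSet_toMeasurable _ _, subset_toMeasurable _ _, fun F hF hFsub => ?_⟩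
    have : volume F = volume (C ∩ F) := by
      rw [Set.inter_eq_right.mpr (fun y hy => (hFsub hy).1)]
    rw [this, hC, MeasureTheory.Measure.measure_toMeasurable_inter_of_sFinite hF]
    have : Aᶜ ∩ F = ∅ := by
      ext y; simp only [Set.mem_inter_iff, Set.mem_empty_iff_false, iff_false]
      rintro ⟨hyc, hyF⟩; exact (hFsub hyF).2 hyc
    simp [this]
  have hmain := hsp A' hA'.1 hlt C hcov
  have hun : C ∪ A' = Set.univ := by
    apply Set.eq_univ_of_univ_subset
    intro y _
    by_cases hy : y ∈ A
    · exact Or.inr (hA'.2.1 hy)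
    · exact Or.inl (subset_toMeasurable _ _ hy)
  rw [hun, upperIDensity_univ] at hmain
  exact lt_irrefl 1 hmain
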